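/- Genus 2 commutation relation: for the derivations L_0, L_2, L_4, L_6 of ℚ[λ₄,λ₆,λ₈,λ_{10}] defined by L_{2k}(λ_{2s}) = T_{2k+2,2s−2} with T the explicit genus-2 matrix, one has [L_2, L_4] = (2/5)(4λ₆ L_0 − 4λ₄ L_2 + 5 L_6). -/
import Mathlib


open MvPolynomial

/-- Variables: `X 0 = λ₄`, `X 1 = λ₆`, `X 2 = λ₈`, `X 3 = λ₁₀`. -/
noncomputable abbrev l4 : MvPolynomial (Fin 4) ℚ := X 0
noncomputable abbrev l6 : MvPolynomial (Fin 4) ℚ := X 1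
noncomputable abbrev l8 : MvPolynomial (Fin 4) ℚ := X 2
noncomputable abbrev l10 : MvPolynomial (Fin 4) ℚ := X 3

/-- The genus-2 matrix `T = (T_{2k+2,2s−2})`, rows and columns indexed by
`0,1,2,3 ↔ λ₄,λ₆,λ₈,λ₁₀`. -/
noncomputable def T2 : Matrix (Fin 4) (Fin 4) (MvPolynomial (Fin 4) ℚ) :=
  ![![4 * l4, 6 * l6, 8 * l8, 10 * l10],
    ![6 * l6, 8 * l8 - C (12/5 : ℚ) * l4 ^ 2, 10 * l10 - C (8/5 : ℚ) * l4 * l6,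
      - (C (4/5 : ℚ) * l4 * l8)],
    ![8 * l8, 10 * l10 - C (8/5 : ℚ) * l4 * l6, 4 * l4 * l8 - C (12/5 : ℚ) * l6 ^ 2,
      6 * l4 * l10 - C (6/5 : ℚ) * l6 * l8],
    ![10 * l10, - (C (4/5 : ℚ) * l4 * l8), 6 * l4 * l10 - C (6/5 : ℚ) * l6 * l8,
      4 * l6 * l10 - C (8/5 : ℚ) * l8 ^ 2]]

/-- The derivation `L_{2k} = Σ_s T_{2k+2,2s−2} ∂/∂λ_{2s}` of `ℚ[λ₄,λ₆,λ₈,λ₁₀]`;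
`Lg2 k` is `L_{2k}`. -/
noncomputable def Lg2 (k : Fin 4) (p : MvPolynomial (Fin 4) ℚ) : MvPolynomial (Fin 4) ℚ :=
  ∑ j : Fin 4, T2 k j * pderiv j p

set_option maxHeartbeats 1000000

lemma pderiv_comm' (i j : Fin 4) (p : MvPolynomial (Fin 4) ℚ) :
    pderiv i (pderiv j p) = pderiv j (pderiv i p) := by
  induction p using MvPolynomial.induction_on with
  | C a => simp
  | add p q hp hq => simp [hp, hq]
  | mul_X p n hp =>
    simp only [pderiv_mul, map_add, hp, pderiv_X, Pi.single_apply,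
      apply_ite (pderiv i), apply_ite (pderiv j), map_zero, map_one, pderiv_one, ite_self,
      mul_zero, add_zero]
    ring

lemma pderiv_ofNat' (i : Fin 4) (n : ℕ) [n.AtLeastTwo] :
    pderiv i (no_index (OfNat.ofNat n) : MvPolynomial (Fin 4) ℚ) = 0 := by
  rw [← map_ofNat (C : ℚ →+* MvPolynomial (Fin 4) ℚ) n, pderiv_C]

lemma bracket (a b : Fin 4 → MvPolynomial (Fin 4) ℚ) (p : MvPolynomial (Fin 4) ℚ) :
    (∑ j : Fin 4, a j * pderiv j (∑ i : Fin 4, b i * pderiv i p))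
      - (∑ j : Fin 4, b j * pderiv j (∑ i : Fin 4, a i * pderiv i p))
    = ∑ i : Fin 4, (∑ j : Fin 4, (a j * pderiv j (b i) - b j * pderiv j (a i)))
        * pderiv i p := by
  simp only [Fin.sum_univ_four, map_add, pderiv_mul]
  rw [pderiv_comm' 0 1 p, pderiv_comm' 0 2 p, pderiv_comm' 0 3 p, pderiv_comm' 1 2 p,
    pderiv_comm' 1 3 p, pderiv_comm' 2 3 p]
  ring

lemma hC5 : (5 : MvPolynomial (Fin 4) ℚ) * C (5⁻¹ : ℚ) = 1 := by
  rw [← map_ofNat (C : ℚ →+* MvPolynomial (Fin 4) ℚ) 5, ← map_mul]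
  norm_num

lemma hC12 : (C (12/5 : ℚ) : MvPolynomial (Fin 4) ℚ) = 12 * C (1/5 : ℚ) := by
  rw [← map_ofNat (C : ℚ →+* MvPolynomial (Fin 4) ℚ) 12, ← map_mul]; norm_num
lemma hC8 : (C (8/5 : ℚ) : MvPolynomial (Fin 4) ℚ) = 8 * C (1/5 : ℚ) := by
  rw [← map_ofNat (C : ℚ →+* MvPolynomial (Fin 4) ℚ) 8, ← map_mul]; norm_num
lemma hC4 : (C (4/5 : ℚ) : MvPolynomial (Fin 4) ℚ) = 4 * C (1/5 : ℚ) := by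
  rw [← map_ofNat (C : ℚ →+* MvPolynomial (Fin 4) ℚ) 4, ← map_mul]; norm_num
lemma hC6 : (C (6/5 : ℚ) : MvPolynomial (Fin 4) ℚ) = 6 * C (1/5 : ℚ) := by
  rw [← map_ofNat (C : ℚ →+* MvPolynomial (Fin 4) ℚ) 6, ← map_mul]; norm_num
lemma hC2 : (C (2/5 : ℚ) : MvPolynomial (Fin 4) ℚ) = 2 * C (1/5 : ℚ) := by
  rw [← map_ofNat (C : ℚ →+* MvPolynomial (Fin 4) ℚ) 2, ← map_mul]; norm_num

lemma coeff0 : (∑ j : Fin 4, (T2 1 j * pderiv j (T2 2 0) - T2 2 j * pderiv j (T2 1 0)))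
    = C (2/5 : ℚ) * (4 * l6 * T2 0 0 - 4 * l4 * T2 1 0 + 5 * T2 3 0) := by
  simp [T2, Fin.sum_univ_four, pderiv_mul, pderiv_ofNat', pderiv_C_mul, Pi.single_apply,
    hC12, hC8, hC4, hC6, hC2, smul_eq_C_mul]
  linear_combination (-20 * l10) * hC5

lemma coeff1 : (∑ j : Fin 4, (T2 1 j * pderiv j (T2 2 1) - T2 2 j * pderiv j (T2 1 1)))
    = C (2/5 : ℚ) * (4 * l6 * T2 0 1 - 4 * l4 * T2 1 1 + 5 * T2 3 1) := by
  simp [T2, Fin.sum_univ_four, pderiv_mul, pderiv_ofNat', pderiv_C_mul, Pi.single_apply,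
    hC12, hC8, hC4, hC6, hC2, smul_eq_C_mul]
  linear_combination (32 * l4 * l8 + 8 * l4 * l8 * C (5⁻¹ : ℚ)) * hC5

lemma coeff2 : (∑ j : Fin 4, (T2 1 j * pderiv j (T2 2 2) - T2 2 j * pderiv j (T2 1 2)))
    = C (2/5 : ℚ) * (4 * l6 * T2 0 2 - 4 * l4 * T2 1 2 + 5 * T2 3 2) := by
  simp [T2, Fin.sum_univ_four, pderiv_mul, pderiv_ofNat', pderiv_C_mul, Pi.single_apply,
    hC12, hC8, hC4, hC6, hC2, smul_eq_C_mul]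
  linear_combination (-24 * l6 * l8 + 12 * l6 * l8 * C (5⁻¹ : ℚ) + 20 * l4 * l10
    + 32 * l4 * l4 * l6 * C (5⁻¹ : ℚ)) * hC5

lemma coeff3 : (∑ j : Fin 4, (T2 1 j * pderiv j (T2 2 3) - T2 2 j * pderiv j (T2 1 3)))
    = C (2/5 : ℚ) * (4 * l6 * T2 0 3 - 4 * l4 * T2 1 3 + 5 * T2 3 3) := by
  simp [T2, Fin.sum_univ_four, pderiv_mul, pderiv_ofNat', pderiv_C_mul, Pi.single_apply,
    hC12, hC8, hC4, hC6, hC2, smul_eq_C_mul]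
  linear_combination (16 * l8 * l8 * C (5⁻¹ : ℚ) - 36 * l6 * l10
    + 8 * l4 * l4 * l8 * C (5⁻¹ : ℚ)) * hC5

/-- `[L₂, L₄] = (2/5)(4λ₆ L₀ − 4λ₄ L₂ + 5 L₆)`. -/
theorem genus2_bracket_L2_L4 (p : MvPolynomial (Fin 4) ℚ) :
    Lg2 1 (Lg2 2 p) - Lg2 2 (Lg2 1 p)
      = C (2/5 : ℚ) * (4 * l6 * Lg2 0 p - 4 * l4 * Lg2 1 p + 5 * Lg2 3 p) := by
  simp only [Lg2]
  rw [bracket (fun j => T2 1 j) (fun i => T2 2 i) p]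
  simp only [Fin.sum_univ_four]
  have c0 := coeff0; have c1 := coeff1; have c2 := coeff2; have c3 := coeff3
  simp only [Fin.sum_univ_four] at c0 c1 c2 c3
  linear_combination (pderiv 0 p) * c0 + (pderiv 1 p) * c1
    + (pderiv 2 p) * c2 + (pderiv 3 p) * c3
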